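/- Let z ∈ R^m, r ≥ 1, and α = 1 + 1/r. The vector p with p_i = ([(α−1)z_i − τ]_+)^{1/(α−1)}, where τ is chosen so that Σ_i p_i = 1, is the unique maximizer over the simplex Δ_m of the objective ⟨z, p⟩ + H_α(p), where H_α(p) = (1/(α(α−1)))(1 − Σ_i p_i^α) is the Tsallis α-entropy. -/

import Mathlib

/-- Strict tangent-line inequality for `t ↦ t ^ α`, `α > 1`. -/
lemma tangent_rpow {α s t : ℝ} (hα : 1 < α) (hs : 0 < s) (ht : 0 ≤ t) (hts : t ≠ s) :
    s ^ α + α * s ^ (α - 1) * (t - s) < t ^ α := by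
  have hx : (-1 : ℝ) ≤ t / s - 1 := by
    have := div_nonneg ht hs.le; linarith
  have hx0 : t / s - 1 ≠ 0 := by
    intro h
    apply hts
    have : t / s = 1 := by linarith
    field_simp at this
    linarith
  have hb := one_add_mul_self_lt_rpow_one_add hx hx0 hα
  have h1 : (1 + (t / s - 1)) = t / s := by ring
  rw [h1] at hb
  have hdiv : (t / s) ^ α = t ^ α / s ^ α := Real.div_rpow ht hs.le α
  have hsα : 0 < s ^ α := Real.rpow_pos_of_pos hs α
  have hs1 : s ^ α = s ^ (α - 1) * s := by
    rw [← Real.rpow_add_one hs.ne' (α - 1)]; ring_nf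
  have hmul := mul_lt_mul_of_pos_left hb hsα
  rw [hdiv, mul_div_cancel₀ _ hsα.ne'] at hmul
  have hexp : s ^ α * (1 + α * (t / s - 1)) = s ^ α + α * s ^ (α - 1) * (t - s) := by
    rw [hs1]; field_simp
  linarith [hexp ▸ hmul]

/-- Per-coordinate strict inequality. -/
lemma key_strict {α τ z s t : ℝ} (hα : 1 < α)
    (hs : s = (max ((α - 1) * z - τ) 0) ^ (1 / (α - 1))) (ht : 0 ≤ t) (hts : t ≠ s) :
    z * t - (1 / (α * (α - 1))) * t ^ α - (τ / (α - 1)) * t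
      < z * s - (1 / (α * (α - 1))) * s ^ α - (τ / (α - 1)) * s := by
  have h1 : (0 : ℝ) < α - 1 := by linarith
  have hα0 : (0 : ℝ) < α := by linarith
  have hc : (0 : ℝ) < 1 / (α * (α - 1)) := by positivity
  set A := (α - 1) * z - τ with hA
  rcases le_or_gt A 0 with hA0 | hA0
  · -- A ≤ 0 : s = 0
    have hs0 : s = 0 := by
      rw [hs, max_eq_right hA0, Real.zero_rpow (by positivity : 1 / (α - 1) ≠ 0)]
    have ht0 : 0 < t := lt_of_le_of_ne ht (fun h => hts (h ▸ hs0.symm))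
    have hzμ : z - τ / (α - 1) = A / (α - 1) := by
      rw [hA]; field_simp <;> ring
    have hzle : z - τ / (α - 1) ≤ 0 := by
      rw [hzμ]; exact div_nonpos_of_nonpos_of_nonneg hA0 h1.le
    have htα : 0 < t ^ α := Real.rpow_pos_of_pos ht0 α
    have h0α : (0 : ℝ) ^ α = 0 := Real.zero_rpow hα0.ne'
    rw [hs0, h0α]
    nlinarith [mul_nonpos_of_nonpos_of_nonneg hzle ht, mul_pos hc htα]
  · -- A > 0 : s = A ^ (1/(α-1)), s ^ (α-1) = A
    have hspos : 0 < s := by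
      rw [hs, max_eq_left hA0.le]; exact Real.rpow_pos_of_pos hA0 _
    have hsA : s ^ (α - 1) = A := by
      rw [hs, max_eq_left hA0.le, one_div, Real.rpow_inv_rpow hA0.le h1.ne']
    have htan := tangent_rpow hα hspos ht hts
    rw [hsA] at htan
    have hmul := mul_lt_mul_of_pos_left htan hc
    have h2 : (1 / (α * (α - 1))) * (α * A * (t - s)) = (z - τ / (α - 1)) * (t - s) := by
      rw [hA]; field_simp
    have hmul' : (1 / (α * (α - 1))) * s ^ α + (z - τ / (α - 1)) * (t - s)
        < (1 / (α * (α - 1))) * t ^ α := by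
      rw [mul_add] at hmul
      linarith [h2, hmul]
    nlinarith [hmul']

lemma key_le {α τ z s t : ℝ} (hα : 1 < α)
    (hs : s = (max ((α - 1) * z - τ) 0) ^ (1 / (α - 1))) (ht : 0 ≤ t) :
    z * t - (1 / (α * (α - 1))) * t ^ α - (τ / (α - 1)) * t
      ≤ z * s - (1 / (α * (α - 1))) * s ^ α - (τ / (α - 1)) * s := by
  rcases eq_or_ne t s with rfl | h
  · exact le_refl _
  · exact (key_strict hα hs ht h).le

theorem stmt5 (m : ℕ) (hm : 0 < m) (z : Fin m → ℝ) (r : ℝ) (hr : 1 ≤ r)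
    (α : ℝ) (hα : α = 1 + 1/r) (τ : ℝ)
    (p : Fin m → ℝ)
    (hp : ∀ i, p i = (max ((α - 1) * z i - τ) 0) ^ (1/(α - 1)))
    (hsum : ∑ i, p i = 1) :
    ((∀ i, 0 ≤ p i) ∧ ∑ i, p i = 1) ∧
      ∀ p' : Fin m → ℝ, (∀ i, 0 ≤ p' i) → (∑ i, p' i = 1) →
        ((∑ i, z i * p' i) + (1/(α * (α - 1))) * (1 - ∑ i, (p' i) ^ α)
          ≤ (∑ i, z i * p i) + (1/(α * (α - 1))) * (1 - ∑ i, (p i) ^ α)) ∧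
        ((∑ i, z i * p' i) + (1/(α * (α - 1))) * (1 - ∑ i, (p' i) ^ α)
          = (∑ i, z i * p i) + (1/(α * (α - 1))) * (1 - ∑ i, (p i) ^ α) → p' = p) := by
  have hr0 : 0 < r := by linarith
  have hα1 : 1 < α := by
    have h0 : 0 < 1 / r := by positivity
    rw [hα]; linarith
  have hpnn : ∀ i, 0 ≤ p i := fun i => by
    rw [hp i]; exact Real.rpow_nonneg (le_max_right _ _) _
  refine ⟨⟨hpnn, hsum⟩, fun p' hp'nn hp'sum => ?_⟩
  set c := 1 / (α * (α - 1)) with hc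
  set μ := τ / (α - 1) with hμ
  set φ : (Fin m → ℝ) → Fin m → ℝ := fun q i => z i * q i - c * (q i) ^ α - μ * q i with hφ
  have hsumφ : ∀ q : Fin m → ℝ, (∑ i, q i = 1) →
      ∑ i, φ q i = (∑ i, z i * q i) - c * (∑ i, (q i) ^ α) - μ := by
    intro q hq
    simp only [hφ, Finset.sum_sub_distrib, ← Finset.mul_sum, hq, mul_one]
  have hle : ∀ i, φ p' i ≤ φ p i := fun i =>
    key_le hα1 (hp i) (hp'nn i)
  have hsumle : ∑ i, φ p' i ≤ ∑ i, φ p i := Finset.sum_le_sum fun i _ => hle i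
  rw [hsumφ p' hp'sum, hsumφ p hsum] at hsumle
  constructor
  · nlinarith [hsumle]
  · intro heq
    by_contra hne
    obtain ⟨i₀, hi₀⟩ := Function.ne_iff.mp hne
    have hstrict : ∑ i, φ p' i < ∑ i, φ p i :=
      Finset.sum_lt_sum (fun i _ => hle i)
        ⟨i₀, Finset.mem_univ i₀, key_strict hα1 (hp i₀) (hp'nn i₀) hi₀⟩
    rw [hsumφ p' hp'sum, hsumφ p hsum] at hstrict
    nlinarith [hstrict]
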